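/- arXiv:2008.05345 — 8 statements merged into one kernel-verified Lean document; each statement's English description precedes it below -/
import Mathlib

section
/- Let G be a graph, U its set of universal vertices, and k a positive integer. The k-tuple domination number of G equals k if and only if |U| ≥ k. -/
open Set

def closedNbhd {V : Type*} (G : SimpleGraph V) (v : V) : Set V :=
  insert v (G.neighborSet v)

def IsKTupleDomSet {V : Type*} (G : SimpleGraph V) (k : ℕ) (D : Set V) : Prop :=
  ∀ v : V, k ≤ (closedNbhd G v ∩ D).ncard

noncomputable def ktupleDomNum {V : Type*} (G : SimpleGraph V) (k : ℕ) : ℕ :=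
  sInf {d | ∃ D : Set V, IsKTupleDomSet G k D ∧ D.ncard = d}

def IsUniversal {V : Type*} (G : SimpleGraph V) (u : V) : Prop :=
  ∀ w : V, w ≠ u → G.Adj u w

theorem stmt_1 {V : Type*} [Fintype V] (G : SimpleGraph V) (k : ℕ) (hk : 0 < k) :
    ktupleDomNum G k = k ↔ k ≤ {u : V | IsUniversal G u}.ncard := by
  constructor
  · intro h
    have hS : {d | ∃ D : Set V, IsKTupleDomSet G k D ∧ D.ncard = d}.Nonempty := by
      by_contra hne
      rw [Set.not_nonempty_iff_eq_empty] at hne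
      rw [ktupleDomNum, hne, Nat.sInf_empty] at h
      omega
    have hmem : ktupleDomNum G k ∈ {d | ∃ D : Set V, IsKTupleDomSet G k D ∧ D.ncard = d} :=
      Nat.sInf_mem hS
    rw [h] at hmem
    obtain ⟨D, hD, hcard⟩ := hmem
    -- every vertex's closed neighborhood contains D
    have hsub : ∀ v : V, D ⊆ closedNbhd G v := by
      intro v
      have h1 : closedNbhd G v ∩ D ⊆ D := Set.inter_subset_right
      have h2 : D.ncard ≤ (closedNbhd G v ∩ D).ncard := by
        rw [hcard]; exact hD v
      have := Set.eq_of_subset_of_ncard_le h1 h2 (Set.toFinite D)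
      rw [← this]
      exact Set.inter_subset_left
    have hDU : D ⊆ {u : V | IsUniversal G u} := by
      intro u hu w hw
      have := hsub w hu
      rcases this with h' | h'
      · exact absurd h'.symm hw
      · exact (G.mem_neighborSet w u).mp h' |>.symm
    calc k = D.ncard := hcard.symm
      _ ≤ _ := Set.ncard_le_ncard hDU (Set.toFinite _)
  · intro h
    obtain ⟨D, hDU, hcard⟩ := Set.exists_subset_card_eq h
    have hDdom : IsKTupleDomSet G k D := by
      intro v
      have hsub : D ⊆ closedNbhd G v := by
        intro u hu
        by_cases huv : u = v
        · exact huv ▸ Set.mem_insert _ _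
        · exact Set.mem_insert_of_mem _ ((hDU hu v (fun hvu => huv hvu.symm)).symm)
      rw [Set.inter_eq_self_of_subset_right hsub, hcard]
    have hkmem : k ∈ {d | ∃ D : Set V, IsKTupleDomSet G k D ∧ D.ncard = d} :=
      ⟨D, hDdom, hcard⟩
    have hle : ktupleDomNum G k ≤ k := Nat.sInf_le hkmem
    have hge : k ≤ ktupleDomNum G k := by
      have hmem := Nat.sInf_mem ⟨k, hkmem⟩
      obtain ⟨D', hD', hcard'⟩ := hmem
      have hVne : Nonempty V := by
        have : D.Nonempty := Set.nonempty_of_ncard_ne_zero (by omega)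
        exact ⟨this.choose⟩
      obtain ⟨v⟩ := hVne
      calc k ≤ (closedNbhd G v ∩ D').ncard := hD' v
        _ ≤ D'.ncard := Set.ncard_le_ncard Set.inter_subset_right (Set.toFinite _)
        _ = _ := hcard'
    omega
end

section
/- Let G be a graph, u a universal vertex of G, and k a positive integer with k ≤ δ(G)+1, where δ(G) is the minimum degree. Then γ_{×k}(G) = γ_{×(k−1)}(G − u) + 1, where G − u is the subgraph induced on V(G)∖{u}. -/
open Set

lemma aux_mem {V : Type*} {G : SimpleGraph V} {u : V} (hu : IsUniversal G u) (v : V) :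
    u ∈ closedNbhd G v := by
  by_cases h : v = u
  · subst h; exact mem_insert _ _
  · exact Set.mem_insert_of_mem _ ((hu v h).symm)

lemma aux_img {V : Type*} (G : SimpleGraph V) (u : V) (v : V) (hv : v ≠ u)
    (D' : Set {v : V | v ≠ u}) :
    Subtype.val '' (closedNbhd (G.induce {v : V | v ≠ u}) ⟨v, hv⟩ ∩ D')
      = closedNbhd G v ∩ (Subtype.val '' D') := by
  ext w
  simp only [closedNbhd, Set.mem_image, Set.mem_inter_iff, Set.mem_insert_iff,
    SimpleGraph.mem_neighborSet, SimpleGraph.comap_adj]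
  constructor
  · rintro ⟨⟨w, hw⟩, ⟨h1, h2⟩, rfl⟩
    refine ⟨?_, ⟨w, hw⟩, h2, rfl⟩
    rcases h1 with h1 | h1
    · left; exact congrArg Subtype.val h1
    · right; exact h1
  · rintro ⟨h1, ⟨w', hw'⟩, h2, rfl⟩
    refine ⟨⟨w', hw'⟩, ⟨?_, h2⟩, rfl⟩
    rcases h1 with h1 | h1
    · left; exact Subtype.ext h1
    · right; exact h1

lemma aux_cn_card {V : Type*} [Fintype V] (G : SimpleGraph V) (v : V) :
    (closedNbhd G v).ncard = (G.neighborSet v).ncard + 1 := by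
  rw [closedNbhd, Set.ncard_insert_of_notMem (by simp)]

theorem stmt_3 {V : Type*} [Fintype V] (G : SimpleGraph V) (u : V) (hu : IsUniversal G u)
    (k : ℕ) (hk : 0 < k) (hdeg : ∀ v : V, k ≤ (G.neighborSet v).ncard + 1) :
    ktupleDomNum G k = ktupleDomNum (G.induce {v : V | v ≠ u}) (k - 1) + 1 := by
  classical
  have hcnu : closedNbhd G u = univ := by
    ext w
    simp only [mem_univ, iff_true, closedNbhd, Set.mem_insert_iff,
      SimpleGraph.mem_neighborSet]
    by_cases h : w = u
    · left; exact h
    · right; exact hu w h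
  have himgval : ∀ D' : Set {v : V | v ≠ u}, (Subtype.val '' D').ncard = D'.ncard := by
    intro D'
    exact Set.ncard_image_of_injective _ Subtype.val_injective
  have hunotin : ∀ D' : Set {v : V | v ≠ u}, u ∉ Subtype.val '' D' := by
    rintro D' ⟨⟨w, hw⟩, _, h⟩; exact hw h
  have hN : IsKTupleDomSet G k univ := by
    intro v
    rw [Set.inter_univ, aux_cn_card]
    exact hdeg v
  have hN' : IsKTupleDomSet (G.induce {v : V | v ≠ u}) (k - 1) univ := by
    rintro ⟨v, hv⟩
    have h1 : (closedNbhd (G.induce {v : V | v ≠ u}) ⟨v, hv⟩ ∩ univ).ncard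
        = (closedNbhd G v ∩ (Subtype.val '' (univ : Set {v : V | v ≠ u}))).ncard := by
      rw [← himgval, aux_img]
    have h2 : closedNbhd G v ∩ (Subtype.val '' (univ : Set {v : V | v ≠ u}))
        = closedNbhd G v \ {u} := by
      ext w
      simp only [Set.mem_inter_iff, Set.mem_diff, Set.mem_singleton_iff, Set.mem_image,
        Set.mem_univ]
      constructor
      · rintro ⟨h3, ⟨w', hw'⟩, _, rfl⟩; exact ⟨h3, hw'⟩
      · rintro ⟨h3, h4⟩; exact ⟨h3, ⟨w, h4⟩, trivial, rfl⟩
    rw [h1, h2, Set.ncard_diff_singleton_of_mem (aux_mem hu v), aux_cn_card]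
    have := hdeg v
    omega
  set m := ktupleDomNum (G.induce {v : V | v ≠ u}) (k - 1) with hm
  obtain ⟨D', hD'dom, hD'card⟩ :
      m ∈ {d | ∃ D : Set {v : V | v ≠ u},
        IsKTupleDomSet (G.induce {v : V | v ≠ u}) (k - 1) D ∧ D.ncard = d} :=
    Nat.sInf_mem ⟨_, univ, hN', rfl⟩
  set n := ktupleDomNum G k with hn
  obtain ⟨D, hDdom, hDcard⟩ :
      n ∈ {d | ∃ D : Set V, IsKTupleDomSet G k D ∧ D.ncard = d} :=
    Nat.sInf_mem ⟨_, univ, hN, rfl⟩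
  have hle : n ≤ m + 1 := by
    set D₀ : Set V := insert u (Subtype.val '' D') with hD₀
    have hcard₀ : D₀.ncard = m + 1 := by
      rw [hD₀, Set.ncard_insert_of_notMem (hunotin D'), himgval, hD'card]
    have hdom₀ : IsKTupleDomSet G k D₀ := by
      intro v
      by_cases hv : v = u
      · rw [hv, hcnu, Set.univ_inter, hcard₀]
        by_cases hne : Nonempty {v : V | v ≠ u}
        · obtain ⟨x⟩ := hne
          have h1 := hD'dom x
          have h2 : (closedNbhd (G.induce {v : V | v ≠ u}) x ∩ D').ncard ≤ D'.ncard :=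
            Set.ncard_le_ncard Set.inter_subset_right (Set.toFinite _)
          omega
        · have hnb : G.neighborSet u = ∅ := by
            ext w
            simp only [SimpleGraph.mem_neighborSet, Set.mem_empty_iff_false, iff_false]
            intro hadj
            exact hne ⟨⟨w, fun h => hadj.ne h.symm⟩⟩
          have := hdeg u
          rw [hnb] at this
          simp only [Set.ncard_empty] at this
          omega
      · have heq : closedNbhd G v ∩ D₀ = insert u (closedNbhd G v ∩ Subtype.val '' D') := by
          rw [hD₀, Set.inter_insert_of_mem (aux_mem hu v)]
        rw [heq, Set.ncard_insert_of_notMem (fun h => hunotin D' h.2),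
          ← aux_img G u v hv, himgval]
        have := hD'dom ⟨v, hv⟩
        omega
    exact Nat.sInf_le ⟨D₀, hdom₀, hcard₀⟩
  have hge : m + 1 ≤ n := by
    obtain ⟨D₂, hD₂dom, hD₂card, huD₂⟩ :
        ∃ D₂ : Set V, IsKTupleDomSet G k D₂ ∧ D₂.ncard ≤ n ∧ u ∈ D₂ := by
      by_cases huD : u ∈ D
      · exact ⟨D, hDdom, hDcard.le, huD⟩
      · have hDne : D.Nonempty := by
          rcases Set.eq_empty_or_nonempty D with h | h
          · exfalso
            have := hDdom u
            rw [h, Set.inter_empty, Set.ncard_empty] at this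
            omega
          · exact h
        obtain ⟨d, hd⟩ := hDne
        refine ⟨insert u (D \ {d}), ?_, ?_, Set.mem_insert _ _⟩
        · intro v
          have heq : closedNbhd G v ∩ insert u (D \ {d})
              = insert u ((closedNbhd G v ∩ D) \ {d}) := by
            rw [Set.inter_insert_of_mem (aux_mem hu v), Set.inter_diff_distrib_left]
            congr 1
            ext w
            simp only [Set.mem_diff, Set.mem_inter_iff, Set.mem_singleton_iff]
            tauto
          rw [heq, Set.ncard_insert_of_notMem (by rintro ⟨⟨-, h⟩, -⟩; exact huD h)]
          have h1 : (closedNbhd G v ∩ D).ncard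
              ≤ ((closedNbhd G v ∩ D) \ {d}).ncard + 1 := by
            calc (closedNbhd G v ∩ D).ncard
                ≤ (insert d ((closedNbhd G v ∩ D) \ {d})).ncard :=
                  Set.ncard_le_ncard (fun w hw => by
                    by_cases hwd : w = d
                    · exact hwd ▸ Set.mem_insert _ _
                    · exact Set.mem_insert_of_mem _ ⟨hw, hwd⟩) (Set.toFinite _)
              _ ≤ ((closedNbhd G v ∩ D) \ {d}).ncard + 1 := Set.ncard_insert_le _ _
          have := hDdom v
          omega
        · rw [Set.ncard_insert_of_notMem (by rintro ⟨h, -⟩; exact huD h),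
            Set.ncard_diff_singleton_of_mem hd, hDcard]
          have : 0 < D.ncard := (Set.ncard_pos (Set.toFinite D)).mpr ⟨d, hd⟩
          omega
    set D'₂ : Set {v : V | v ≠ u} := Subtype.val ⁻¹' D₂ with hD'₂
    have hval : Subtype.val '' D'₂ = D₂ \ {u} := by
      ext w
      simp only [hD'₂, Set.mem_image, Set.mem_preimage, Set.mem_diff, Set.mem_singleton_iff]
      constructor
      · rintro ⟨⟨w', hw'⟩, h1, rfl⟩; exact ⟨h1, hw'⟩
      · rintro ⟨h1, h2⟩; exact ⟨⟨w, h2⟩, h1, rfl⟩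
    have hdom' : IsKTupleDomSet (G.induce {v : V | v ≠ u}) (k - 1) D'₂ := by
      rintro ⟨v, hv⟩
      have h1 : (closedNbhd (G.induce {v : V | v ≠ u}) ⟨v, hv⟩ ∩ D'₂).ncard
          = ((closedNbhd G v ∩ D₂) \ {u}).ncard := by
        rw [← himgval, aux_img, hval, ← Set.inter_diff_assoc]
      rw [h1, Set.ncard_diff_singleton_of_mem (Set.mem_inter (aux_mem hu v) huD₂)]
      have := hD₂dom v
      omega
    have hmle : m ≤ D'₂.ncard := Nat.sInf_le ⟨D'₂, hdom', rfl⟩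
    have hc : D'₂.ncard = D₂.ncard - 1 := by
      rw [← himgval, hval, Set.ncard_diff_singleton_of_mem huD₂]
    have hpos : 0 < D₂.ncard := (Set.ncard_pos (Set.toFinite D₂)).mpr ⟨u, huD₂⟩
    omega
  omega
end

section
/- Let G be a graph, U the set of its universal vertices, and k a positive integer with |U| ≤ k−1 and k ≤ δ(G)+1. Then γ_{×k}(G) = γ_{×(k−|U|)}(G − U) + |U|. -/
open Set

section Aux

variable {V : Type*} [Fintype V] (G : SimpleGraph V)

omit [Fintype V] in
lemma univ_mem_closedNbhd {u : V} (v : V) (hu : IsUniversal G u) :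
    u ∈ closedNbhd G v := by
  by_cases h : u = v
  · exact h ▸ mem_insert _ _
  · exact Or.inr ((hu v (fun e => h e.symm)).symm)

/-- Exchange lemma: from any k-tuple dominating set we can obtain one of no
larger size containing all universal vertices. -/
lemma exchange (U : Set V) (hU : U = {u : V | IsUniversal G u}) (k : ℕ)
    (hk : 0 < k) (hUk : U.ncard ≤ k - 1) :
    ∀ n (D : Set V), (U \ D).ncard = n → IsKTupleDomSet G k D →
      ∃ E : Set V, IsKTupleDomSet G k E ∧ U ⊆ E ∧ E.ncard ≤ D.ncard := by
  intro n
  induction n using Nat.strong_induction_on with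
  | _ n ih =>
    intro D hn hD
    by_cases hsub : U ⊆ D
    · exact ⟨D, hD, hsub, le_rfl⟩
    · obtain ⟨u, huU, huD⟩ := not_subset.mp hsub
      have huniv : IsUniversal G u := by have := huU; rwa [hU] at this
      have hDk : k ≤ D.ncard :=
        le_trans (hD u) (ncard_le_ncard inter_subset_right (toFinite _))
      have hDU : ¬ D ⊆ U := by
        intro h
        have := ncard_le_ncard h (toFinite _)
        omega
      obtain ⟨w, hwD, hwU⟩ := not_subset.mp hDU
      have huE : u ∉ D \ {w} := fun h => huD h.1
      have hEcard : (insert u (D \ {w})).ncard = D.ncard := by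
        rw [ncard_insert_of_notMem huE (toFinite _),
            ncard_diff_singleton_of_mem hwD]
        omega
      have hEdom : IsKTupleDomSet G k (insert u (D \ {w})) := by
        intro v
        have h1 : insert u ((closedNbhd G v ∩ D) \ {w}) ⊆
            closedNbhd G v ∩ insert u (D \ {w}) := by
          rintro x (rfl | ⟨hx1, hx2⟩)
          · exact ⟨univ_mem_closedNbhd G v huniv, mem_insert _ _⟩
          · exact ⟨hx1.1, Or.inr ⟨hx1.2, hx2⟩⟩
        refine le_trans ?_ (ncard_le_ncard h1 (toFinite _))
        rw [ncard_insert_of_notMem (fun h => huD h.1.2) (toFinite _)]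
        have h3 := hD v
        have h4 : (closedNbhd G v ∩ D).ncard ≤
            ((closedNbhd G v ∩ D) \ {w}).ncard + 1 := by
          refine le_trans (ncard_le_ncard ?_ (toFinite _)) (ncard_insert_le w _)
          intro x hx
          by_cases hxw : x = w
          · exact hxw ▸ mem_insert _ _
          · exact Or.inr ⟨hx, hxw⟩
        omega
      have hUE : U \ insert u (D \ {w}) = (U \ D) \ {u} := by
        ext x
        simp only [mem_diff, mem_insert_iff, mem_singleton_iff]
        constructor
        · rintro ⟨hx, hx2⟩
          push_neg at hx2
          exact ⟨⟨hx, fun hxD => hwU ((hx2.2 hxD) ▸ hx)⟩, hx2.1⟩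
        · rintro ⟨⟨hx, hxD⟩, hxu⟩
          exact ⟨hx, by push_neg; exact ⟨hxu, fun h1 => absurd h1 hxD⟩⟩
      have hless : ((U \ insert u (D \ {w}))).ncard < n := by
        rw [hUE, ← hn]
        exact ncard_diff_singleton_lt_of_mem ⟨huU, huD⟩ (toFinite _)
      obtain ⟨E', h1, h2, h3⟩ := ih _ hless _ rfl hEdom
      exact ⟨E', h1, h2, h3.trans (le_of_eq hEcard)⟩

end Aux

theorem stmt_4 {V : Type*} [Fintype V] (G : SimpleGraph V)
    (U : Set V) (hU : U = {u : V | IsUniversal G u})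
    (k : ℕ) (hk : 0 < k) (hUk : U.ncard ≤ k - 1)
    (hdeg : ∀ v : V, k ≤ (G.neighborSet v).ncard + 1) :
    ktupleDomNum G k = ktupleDomNum (G.induce Uᶜ) (k - U.ncard) + U.ncard := by
  classical
  set H := G.induce Uᶜ with hH
  set m := U.ncard with hm
  set k' := k - m with hk'
  clear_value m k'
  have hm_lt : m < k := lt_of_le_of_lt hUk (by omega)
  have hk'm : k' + m = k := by omega
  have hk'pos : 0 < k' := by omega
  -- U is contained in every closed neighborhood
  have hUsub : ∀ v : V, U ⊆ closedNbhd G v := by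
    intro v u hu
    rw [hU] at hu
    exact univ_mem_closedNbhd G v hu
  -- image of closed neighborhoods in the induced graph
  have himg : ∀ x : ↥(Uᶜ), Subtype.val '' (closedNbhd H x) = closedNbhd G ↑x ∩ Uᶜ := by
    intro x
    ext w
    simp only [closedNbhd, mem_image, mem_insert_iff, SimpleGraph.mem_neighborSet, hH,
      mem_inter_iff, SimpleGraph.comap_adj]
    constructor
    · rintro ⟨y, (rfl | hy), rfl⟩
      · exact ⟨Or.inl rfl, y.2⟩
      · exact ⟨Or.inr hy, y.2⟩
    · rintro ⟨(rfl | hw), hwc⟩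
      · exact ⟨x, Or.inl rfl, rfl⟩
      · exact ⟨⟨w, hwc⟩, Or.inr hw, rfl⟩
  -- if there is any vertex, then Uᶜ is nonempty
  have hcompl : ∀ _ : V, (Uᶜ : Set V).Nonempty := by
    intro v
    by_contra h
    rw [not_nonempty_iff_eq_empty, compl_empty_iff] at h
    have h1 : (G.neighborSet v).ncard < (univ : Set V).ncard := by
      refine ncard_lt_ncard ⟨subset_univ _, fun hs => ?_⟩ (toFinite _)
      exact (SimpleGraph.notMem_neighborSet_self G) (hs (mem_univ v))
    have h2 := hdeg v
    have h3 : (univ : Set V).ncard = m := by rw [hm, h]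
    omega
  have hsplit : ∀ A : Set V, A.ncard = (A ∩ U).ncard + (A \ U).ncard := by
    intro A
    exact (ncard_inter_add_ncard_diff_eq_ncard A U (toFinite _)).symm
  -- the defining sets are nonempty (univ is a witness)
  have hGne : {d | ∃ D : Set V, IsKTupleDomSet G k D ∧ D.ncard = d}.Nonempty := by
    refine ⟨(univ : Set V).ncard, univ, fun v => ?_, rfl⟩
    rw [inter_univ]
    have : (closedNbhd G v).ncard = (G.neighborSet v).ncard + 1 := by
      rw [closedNbhd, ncard_insert_of_notMem (SimpleGraph.notMem_neighborSet_self G)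
        (toFinite _)]
    have h2 := hdeg v
    omega
  have hHne : {d | ∃ D : Set ↥(Uᶜ), IsKTupleDomSet H k' D ∧ D.ncard = d}.Nonempty := by
    refine ⟨(univ : Set ↥(Uᶜ)).ncard, univ, fun x => ?_, rfl⟩
    rw [inter_univ]
    have h1 : (closedNbhd H x).ncard = (closedNbhd G ↑x ∩ Uᶜ).ncard := by
      rw [← himg x, ncard_image_of_injective _ Subtype.val_injective]
    have h2 : (closedNbhd G ↑x).ncard = (G.neighborSet ↑x).ncard + 1 := by
      rw [closedNbhd, ncard_insert_of_notMem (SimpleGraph.notMem_neighborSet_self G)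
        (toFinite _)]
    have h3 := hsplit (closedNbhd G ↑x)
    have h4 : (closedNbhd G ↑x ∩ U).ncard ≤ m :=
      hm ▸ ncard_le_ncard inter_subset_right (toFinite _)
    have h5 : closedNbhd G ↑x ∩ Uᶜ = closedNbhd G ↑x \ U := by rw [diff_eq]
    have h6 := hdeg ↑x
    rw [h1, h5]
    omega
  refine le_antisymm ?_ ?_
  · -- ≤ : build a dominating set of G from a minimum one of H
    obtain ⟨D', hD', hD'card⟩ := Nat.sInf_mem hHne
    set D : Set V := (Subtype.val '' D') ∪ U with hD
    have hdisj : Disjoint (Subtype.val '' D') U := by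
      rw [disjoint_left]
      rintro a ⟨y, _, rfl⟩ ha
      exact y.2 ha
    have hDcard : D.ncard = D'.ncard + m := by
      rw [hD, ncard_union_eq hdisj (toFinite _) (toFinite _),
        ncard_image_of_injective _ Subtype.val_injective, hm]
    have hDdom : IsKTupleDomSet G k D := by
      intro v
      by_cases hv : v ∈ U
      · -- closed neighborhood is everything
        have hvuniv : IsUniversal G v := by have := hv; rwa [hU] at this
        have hNv : closedNbhd G v ∩ D = D := by
          rw [inter_eq_right]
          intro x hx
          by_cases hxv : x = v
          · exact hxv ▸ mem_insert _ _
          · exact Or.inr (hvuniv x hxv)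
        rw [hNv, hDcard]
        -- D' has size ≥ k'
        obtain ⟨x0, hx0⟩ := hcompl v
        have h0 := hD' ⟨x0, hx0⟩
        have h1 : (closedNbhd H ⟨x0, hx0⟩ ∩ D').ncard ≤ D'.ncard :=
          ncard_le_ncard inter_subset_right (toFinite _)
        omega
      · -- v is not universal: use domination in H plus U
        have hsub2 : (Subtype.val '' (closedNbhd H ⟨v, hv⟩ ∩ D')) ∪ U ⊆
            closedNbhd G v ∩ D := by
          rw [image_inter Subtype.val_injective, himg ⟨v, hv⟩]
          rintro x (⟨⟨hx1, _⟩, hx2⟩ | hx)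
          · exact ⟨hx1, Or.inl hx2⟩
          · exact ⟨hUsub v hx, Or.inr hx⟩
        have hdisj2 : Disjoint (Subtype.val '' (closedNbhd H ⟨v, hv⟩ ∩ D')) U := by
          rw [disjoint_left]
          rintro a ⟨y, _, rfl⟩ ha
          exact y.2 ha
        have h1 : (Subtype.val '' (closedNbhd H ⟨v, hv⟩ ∩ D') ∪ U).ncard =
            (closedNbhd H ⟨v, hv⟩ ∩ D').ncard + m := by
          rw [ncard_union_eq hdisj2 (toFinite _) (toFinite _),
            ncard_image_of_injective _ Subtype.val_injective, hm]
        have h2 := hD' ⟨v, hv⟩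
        have h3 := ncard_le_ncard hsub2 (toFinite (closedNbhd G v ∩ D))
        omega
    calc ktupleDomNum G k ≤ D.ncard := Nat.sInf_le ⟨D, hDdom, rfl⟩
      _ = ktupleDomNum H k' + m := by
          rw [hDcard]
          exact congrArg (· + m) hD'card
  · -- ≥ : take a minimum dominating set of G, WLOG containing U
    obtain ⟨D0, hD0, hD0card⟩ := Nat.sInf_mem hGne
    obtain ⟨D, hDdom, hUD, hDle⟩ := exchange G U hU k hk (hm ▸ hUk) _ D0 rfl hD0
    set D' : Set ↥(Uᶜ) := {x : ↥(Uᶜ) | ↑x ∈ D} with hD'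
    have hD'img : Subtype.val '' D' = D ∩ Uᶜ := by
      ext w
      simp only [hD', mem_image, mem_setOf_eq, mem_inter_iff]
      constructor
      · rintro ⟨y, hy, rfl⟩; exact ⟨hy, y.2⟩
      · rintro ⟨h1, h2⟩; exact ⟨⟨w, h2⟩, h1, rfl⟩
    have hD'card : D'.ncard + m = D.ncard := by
      have h1 : D ∩ U = U := inter_eq_right.mpr hUD
      have h2 := hsplit D
      have h3 : (Subtype.val '' D').ncard = D'.ncard :=
        ncard_image_of_injective _ Subtype.val_injective
      rw [hD'img] at h3
      have h4 : D ∩ Uᶜ = D \ U := by rw [diff_eq]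
      rw [h4] at h3
      rw [h1] at h2
      omega
    have hD'dom : IsKTupleDomSet H k' D' := by
      intro x
      have h1 : closedNbhd G ↑x ∩ D ⊆ (Subtype.val '' (closedNbhd H x ∩ D')) ∪ U := by
        rw [image_inter Subtype.val_injective, himg x, hD'img]
        intro w hw
        by_cases hwU : w ∈ U
        · exact Or.inr hwU
        · exact Or.inl ⟨⟨hw.1, hwU⟩, hw.2, hwU⟩
      have h2 := ncard_le_ncard h1 (toFinite _)
      have h3 : ((Subtype.val '' (closedNbhd H x ∩ D')) ∪ U).ncard ≤
          (closedNbhd H x ∩ D').ncard + m := by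
        refine le_trans (ncard_union_le _ _) ?_
        rw [ncard_image_of_injective _ Subtype.val_injective, hm]
      have h4 := hDdom ↑x
      omega
    have hfin : ktupleDomNum H k' ≤ D'.ncard := Nat.sInf_le ⟨D', hD'dom, rfl⟩
    have hlast : D0.ncard = ktupleDomNum G k := hD0card
    omega
end

section
/- Let G be a co-biconvex graph without universal vertices, with clique partition (C₁, C₂), and let H₁ be the interval graph on vertex set C₁ in which two vertices of C₁ are adjacent if and only if they have a common non-neighbor in C₂. Then a set S ⊆ C₁ is a stable (independent) set of H₁ if and only if S is an (|S|−1)-tuple dominating set of G[C₂], i.e., |N_G[v] ∩ S| ≥ |S|−1 for every v ∈ C₂. -/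
open Set

def auxGraph {V : Type*} (G : SimpleGraph V) (C₁ C₂ : Set V) : SimpleGraph V where
  Adj a b := a ≠ b ∧ a ∈ C₁ ∧ b ∈ C₁ ∧ ∃ v ∈ C₂, ¬ G.Adj v a ∧ ¬ G.Adj v b
  symm := ⟨by rintro a b ⟨h, ha, hb, v, hv, h1, h2⟩; exact ⟨h.symm, hb, ha, v, hv, h2, h1⟩⟩
  loopless := ⟨fun a h => h.1 rfl⟩

def IsStableIn {V : Type*} (H : SimpleGraph V) (S : Set V) : Prop :=
  S.Pairwise fun a b => ¬ H.Adj a b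

noncomputable def indepNumOn {V : Type*} (H : SimpleGraph V) (C : Set V) : ℕ :=
  sSup {d | ∃ S ⊆ C, IsStableIn H S ∧ S.ncard = d}

theorem stmt_7 {V : Type*} [Fintype V] (G : SimpleGraph V) (C₁ C₂ : Set V)
    (hpart : C₁ ∪ C₂ = Set.univ) (hdisj : Disjoint C₁ C₂)
    (hc1 : G.IsClique C₁) (hc2 : G.IsClique C₂)
    (hnouniv : ∀ v : V, ¬ IsUniversal G v)
    (S : Set V) (hS : S ⊆ C₁) :
    IsStableIn (auxGraph G C₁ C₂) S ↔
      ∀ v ∈ C₂, S.ncard - 1 ≤ (closedNbhd G v ∩ S).ncard := by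
  constructor
  · intro hstab v hv
    have hsub : (S \ closedNbhd G v).Subsingleton := by
      intro a ha b hb
      by_contra hne
      exact hstab ha.1 hb.1 hne ⟨hne, hS ha.1, hS hb.1, v, hv,
        fun h => ha.2 (Set.mem_insert_iff.mpr (Or.inr h)),
        fun h => hb.2 (Set.mem_insert_iff.mpr (Or.inr h))⟩
    have h1 : (S \ closedNbhd G v).ncard ≤ 1 := by
      rcases hsub.eq_empty_or_singleton with h | ⟨x, h⟩ <;> simp [h]
    have h2 : (S ∩ closedNbhd G v).ncard + (S \ closedNbhd G v).ncard = S.ncard :=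
      Set.ncard_inter_add_ncard_diff_eq_ncard S (closedNbhd G v) (Set.toFinite S)
    rw [Set.inter_comm]
    omega
  · intro h
    intro a ha b hb hab hadj
    obtain ⟨_, _, _, v, hv, hva, hvb⟩ := hadj
    have hvS : v ∉ S := fun hvS => Set.disjoint_left.mp hdisj (hS hvS) hv
    have hsub : closedNbhd G v ∩ S ⊆ S \ {a, b} := by
      rintro s ⟨hsn, hsS⟩
      rcases hsn with rfl | hadj'
      · exact absurd hsS hvS
      · refine ⟨hsS, ?_⟩
        rintro (rfl | rfl)
        exacts [hva hadj', hvb hadj']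
    have hab2 : ({a, b} : Set V) ⊆ S := by
      rintro s (rfl | rfl) <;> assumption
    have hcard2 : ({a, b} : Set V).ncard = 2 := Set.ncard_pair hab
    have hd : (S \ {a, b}).ncard = S.ncard - 2 := by
      rw [Set.ncard_diff hab2 (Set.toFinite _), hcard2]
    have hle2 : 2 ≤ S.ncard := hcard2 ▸ Set.ncard_le_ncard hab2 (Set.toFinite S)
    have := h v hv
    have hle : (closedNbhd G v ∩ S).ncard ≤ (S \ {a, b}).ncard :=
      Set.ncard_le_ncard hsub (Set.toFinite _)
    omega
end

section
/- Let G be a co-biconvex graph without universal vertices with clique partition (C₁, C₂), auxiliary interval graphs H₁, H₂ with independence numbers α₁, α₂. If α₁ + α₂ > k, then γ_{×k}(G) = k + 1. -/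
open Set

/-- Key counting lemma: if `v` lies in the clique `C₁`, `S₁ ⊆ C₁`, and `S₂ ⊆ C₂` is stable
in the auxiliary graph, then the closed neighborhood of `v` misses at most one vertex of
`S₁ ∪ S₂`. -/
lemma key_count {V : Type*} [Fintype V] (G : SimpleGraph V) (C₁ C₂ S₁ S₂ : Set V)
    (hdisj : Disjoint C₁ C₂) (hc1 : G.IsClique C₁)
    (hS1 : S₁ ⊆ C₁) (hS2 : S₂ ⊆ C₂)
    (hst2 : IsStableIn (auxGraph G C₂ C₁) S₂)
    (v : V) (hv : v ∈ C₁) :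
    S₁.ncard + S₂.ncard ≤ (closedNbhd G v ∩ (S₁ ∪ S₂)).ncard + 1 := by
  have hS1N : S₁ ⊆ closedNbhd G v := by
    intro u hu
    rcases eq_or_ne u v with rfl | hne
    · exact mem_insert _ _
    · exact Set.mem_insert_of_mem _ (by exact (hc1 hv (hS1 hu) hne.symm) : u ∈ G.neighborSet v)
  have hsub : Set.Subsingleton (S₂ \ closedNbhd G v) := by
    intro a ha b hb
    by_contra hab
    refine hst2 ha.1 hb.1 hab ?_
    refine ⟨hab, hS2 ha.1, hS2 hb.1, v, hv, ?_, ?_⟩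
    · intro h; exact ha.2 (Set.mem_insert_of_mem _ h)
    · intro h; exact hb.2 (Set.mem_insert_of_mem _ h)
  have h1 : (S₂ \ closedNbhd G v).ncard ≤ 1 := by
    rcases hsub.eq_empty_or_singleton with h | ⟨a, h⟩
    · simp [h]
    · simp [h]
  have hcover : S₂ ⊆ (closedNbhd G v ∩ S₂) ∪ (S₂ \ closedNbhd G v) := by
    intro a ha
    by_cases h : a ∈ closedNbhd G v
    · exact Or.inl ⟨h, ha⟩
    · exact Or.inr ⟨ha, h⟩
  have h2 : S₂.ncard ≤ (closedNbhd G v ∩ S₂).ncard + 1 := by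
    calc S₂.ncard ≤ ((closedNbhd G v ∩ S₂) ∪ (S₂ \ closedNbhd G v)).ncard :=
          Set.ncard_le_ncard hcover (Set.toFinite _)
      _ ≤ (closedNbhd G v ∩ S₂).ncard + (S₂ \ closedNbhd G v).ncard :=
          Set.ncard_union_le _ _
      _ ≤ (closedNbhd G v ∩ S₂).ncard + 1 := by omega
  have hdisj' : Disjoint S₁ (closedNbhd G v ∩ S₂) :=
    Disjoint.mono hS1 (Set.inter_subset_right.trans hS2) hdisj
  have h3 : S₁ ∪ (closedNbhd G v ∩ S₂) ⊆ closedNbhd G v ∩ (S₁ ∪ S₂) := by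
    rintro a (ha | ⟨haN, haS⟩)
    · exact ⟨hS1N ha, Or.inl ha⟩
    · exact ⟨haN, Or.inr haS⟩
  have h4 : S₁.ncard + (closedNbhd G v ∩ S₂).ncard ≤ (closedNbhd G v ∩ (S₁ ∪ S₂)).ncard := by
    rw [← Set.ncard_union_eq hdisj' (Set.toFinite _) (Set.toFinite _)]
    exact Set.ncard_le_ncard h3 (Set.toFinite _)
  omega

lemma indep_attained {V : Type*} [Fintype V] (H : SimpleGraph V) (C : Set V) :
    ∃ S ⊆ C, IsStableIn H S ∧ S.ncard = indepNumOn H C := by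
  have hne : {d | ∃ S ⊆ C, IsStableIn H S ∧ S.ncard = d}.Nonempty :=
    ⟨0, ∅, Set.empty_subset _, Set.pairwise_empty _, Set.ncard_empty _⟩
  have hbdd : BddAbove {d | ∃ S ⊆ C, IsStableIn H S ∧ S.ncard = d} := by
    refine ⟨Fintype.card V, fun d hd => ?_⟩
    obtain ⟨S, -, -, rfl⟩ := hd
    have := Set.ncard_le_ncard (Set.subset_univ S) (Set.toFinite _)
    simpa [Set.ncard_univ] using this
  exact Nat.sSup_mem hne hbdd

theorem stmt_9 {V : Type*} [Fintype V] (G : SimpleGraph V) (C₁ C₂ : Set V)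
    (hpart : C₁ ∪ C₂ = Set.univ) (hdisj : Disjoint C₁ C₂)
    (hne1 : C₁.Nonempty) (hne2 : C₂.Nonempty)
    (hc1 : G.IsClique C₁) (hc2 : G.IsClique C₂)
    (hnouniv : ∀ v : V, ¬ IsUniversal G v)
    (k : ℕ) (hk : 0 < k)
    (hsum : k < indepNumOn (auxGraph G C₁ C₂) C₁ + indepNumOn (auxGraph G C₂ C₁) C₂) :
    ktupleDomNum G k = k + 1 := by
  -- lower bound: every k-tuple dominating set has size ≥ k+1
  have hlow : ∀ d ∈ {d | ∃ D : Set V, IsKTupleDomSet G k D ∧ D.ncard = d}, k + 1 ≤ d := by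
    rintro d ⟨D, hdom, rfl⟩
    obtain ⟨v₀, hv₀⟩ := hne1
    have hkd : k ≤ D.ncard :=
      le_trans (hdom v₀) (Set.ncard_le_ncard Set.inter_subset_right (Set.toFinite _))
    by_contra hcon
    have hDk : D.ncard = k := by omega
    have hDsub : ∀ v : V, D ⊆ closedNbhd G v := by
      intro v
      have h1 : closedNbhd G v ∩ D ⊆ D := Set.inter_subset_right
      have h2 : D.ncard ≤ (closedNbhd G v ∩ D).ncard := hDk ▸ hdom v
      have heq : closedNbhd G v ∩ D = D := Set.eq_of_subset_of_ncard_le h1 h2 (Set.toFinite _)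
      conv_lhs => rw [← heq]
      exact Set.inter_subset_left
    have hDne : D.Nonempty := Set.nonempty_of_ncard_ne_zero (by omega)
    obtain ⟨u, hu⟩ := hDne
    refine hnouniv u (fun w hw => ?_)
    have := hDsub w hu
    rcases this with h | h
    · exact absurd h.symm hw
    · exact (h : G.Adj w u).symm
  -- upper bound: construct a k-tuple dominating set of size k+1
  obtain ⟨S₁, hS₁C, hst₁, hS₁c⟩ := indep_attained (auxGraph G C₁ C₂) C₁
  obtain ⟨S₂, hS₂C, hst₂, hS₂c⟩ := indep_attained (auxGraph G C₂ C₁) C₂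
  obtain ⟨a, b, hab, ha1, hb2⟩ : ∃ a b, a + b = k + 1 ∧ a ≤ S₁.ncard ∧ b ≤ S₂.ncard := by
    rcases le_or_gt (k + 1) S₁.ncard with h | h
    · exact ⟨k + 1, 0, by omega, h, by omega⟩
    · exact ⟨S₁.ncard, k + 1 - S₁.ncard, by omega, le_rfl, by omega⟩
  obtain ⟨T₁, hT₁S, hT₁c⟩ := Set.exists_subset_card_eq ha1
  obtain ⟨T₂, hT₂S, hT₂c⟩ := Set.exists_subset_card_eq hb2
  have hT₁C : T₁ ⊆ C₁ := hT₁S.trans hS₁C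
  have hT₂C : T₂ ⊆ C₂ := hT₂S.trans hS₂C
  have hstT₁ : IsStableIn (auxGraph G C₁ C₂) T₁ := hst₁.mono hT₁S
  have hstT₂ : IsStableIn (auxGraph G C₂ C₁) T₂ := hst₂.mono hT₂S
  have hdisjT : Disjoint T₁ T₂ := Disjoint.mono hT₁C hT₂C hdisj
  have hcard : T₁.ncard + T₂.ncard = k + 1 := by omega
  have hmem : k + 1 ∈ {d | ∃ D : Set V, IsKTupleDomSet G k D ∧ D.ncard = d} := by
    refine ⟨T₁ ∪ T₂, ?_, ?_⟩
    · intro v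
      have hv : v ∈ C₁ ∪ C₂ := hpart ▸ Set.mem_univ v
      rcases hv with hv | hv
      · have := key_count G C₁ C₂ T₁ T₂ hdisj hc1 hT₁C hT₂C hstT₂ v hv
        omega
      · have := key_count G C₂ C₁ T₂ T₁ hdisj.symm hc2 hT₂C hT₁C hstT₁ v hv
        rw [Set.union_comm T₂ T₁] at this
        omega
    · rw [Set.ncard_union_eq hdisjT (Set.toFinite _) (Set.toFinite _), hcard]
  exact le_antisymm (Nat.sInf_le hmem) (le_csInf ⟨_, hmem⟩ hlow)
end

section
/- Let G be a co-biconvex graph with partition (C₁, C₂, U) where |U| = 1 and C₁, C₂ are nonempty cliques with no universal vertices in G − U. Then γ_{×2}(G) = 3. -/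
open Set

theorem stmt_12 {V : Type*} [Fintype V] (G : SimpleGraph V) (C₁ C₂ U : Set V)
    (hpart : C₁ ∪ C₂ ∪ U = Set.univ)
    (h12 : Disjoint C₁ C₂) (h1U : Disjoint C₁ U) (h2U : Disjoint C₂ U)
    (hc1 : G.IsClique C₁) (hc2 : G.IsClique C₂)
    (hUuniv : ∀ u ∈ U, IsUniversal G u) (hUcard : U.ncard = 1)
    (hne1 : C₁.Nonempty) (hne2 : C₂.Nonempty)
    (hnouniv : ∀ v ∈ C₁ ∪ C₂, ∃ w ∈ C₁ ∪ C₂, w ≠ v ∧ ¬ G.Adj v w) :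
    ktupleDomNum G 2 = 3 := by
  obtain ⟨u, hU⟩ := Set.ncard_eq_one.mp hUcard
  obtain ⟨x, hx⟩ := hne1
  obtain ⟨y, hy⟩ := hne2
  have huU : u ∈ U := by rw [hU]; rfl
  have huniv : IsUniversal G u := hUuniv u huU
  have hxu : x ≠ u := fun h => h1U.ne_of_mem hx huU h
  have hyu : y ≠ u := fun h => h2U.ne_of_mem hy huU h
  have hxy : x ≠ y := h12.ne_of_mem hx hy
  -- the dominating set {u, x, y}
  set D : Set V := {u, x, y} with hD
  have hDcard : D.ncard = 3 := by
    rw [hD, Set.ncard_insert_of_notMem (by simp [hxu.symm, hyu.symm]) (Set.toFinite _),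
      Set.ncard_insert_of_notMem (by simp [hxy]) (Set.toFinite _), Set.ncard_singleton]
  have hmemN : ∀ v w : V, G.Adj v w → w ∈ closedNbhd G v := by
    intro v w h
    exact Set.mem_insert_of_mem _ h
  have hDdom : IsKTupleDomSet G 2 D := by
    intro v
    have hu : u ∈ closedNbhd G v := by
      by_cases h : v = u
      · exact h ▸ Set.mem_insert _ _
      · exact hmemN v u ((huniv v h).symm)
    have hz : ∃ z, z ∈ closedNbhd G v ∧ z ∈ D ∧ z ≠ u := by
      have hvuniv : v ∈ C₁ ∪ C₂ ∪ U := hpart ▸ Set.mem_univ v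
      rcases hvuniv with (hv | hv) | hv
      · refine ⟨x, ?_, by simp [hD], hxu⟩
        by_cases h : v = x
        · exact h ▸ Set.mem_insert _ _
        · exact hmemN v x (hc1 hv hx h)
      · refine ⟨y, ?_, by simp [hD], hyu⟩
        by_cases h : v = y
        · exact h ▸ Set.mem_insert _ _
        · exact hmemN v y (hc2 hv hy h)
      · have hvu : v = u := by rw [hU] at hv; exact hv
        exact ⟨x, hmemN v x (hvu ▸ huniv x hxu), by simp [hD], hxu⟩
    obtain ⟨z, hz1, hz2, hz3⟩ := hz
    have : ({u, z} : Set V) ⊆ closedNbhd G v ∩ D := by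
      intro w hw
      rcases hw with h | h
      · exact h ▸ ⟨hu, by simp [hD]⟩
      · exact h ▸ ⟨hz1, hz2⟩
    calc (2 : ℕ) = ({u, z} : Set V).ncard := by
            rw [Set.ncard_insert_of_notMem (by simp [hz3.symm]) (Set.toFinite _),
              Set.ncard_singleton]
      _ ≤ _ := Set.ncard_le_ncard this (Set.toFinite _)
  have h3mem : 3 ∈ {d | ∃ D : Set V, IsKTupleDomSet G 2 D ∧ D.ncard = d} :=
    ⟨D, hDdom, hDcard⟩
  have hlb : ∀ d ∈ {d | ∃ D : Set V, IsKTupleDomSet G 2 D ∧ D.ncard = d}, 3 ≤ d := by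
    rintro d ⟨E, hEdom, rfl⟩
    by_contra hlt
    push_neg at hlt
    have hEle : E.ncard ≤ 2 := by omega
    -- E is contained in every closed neighborhood
    have hsub : ∀ v : V, E ⊆ closedNbhd G v := by
      intro v
      have h2 := hEdom v
      have hle : E.ncard ≤ (closedNbhd G v ∩ E).ncard := le_trans hEle h2
      have := Set.eq_of_subset_of_ncard_le (Set.inter_subset_right)
        hle (Set.toFinite _)
      rw [← this]
      exact Set.inter_subset_left
    have hE2 : 2 ≤ E.ncard :=
      le_trans (hEdom x) (Set.ncard_le_ncard Set.inter_subset_right (Set.toFinite _))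
    obtain ⟨a, ha, b, hb, hab⟩ := (Set.one_lt_ncard (Set.toFinite E)).mp (by omega)
    have hc : ∃ c ∈ E, c ≠ u := by
      by_cases h : a = u
      · exact ⟨b, hb, fun hbu => hab (by rw [h, hbu])⟩
      · exact ⟨a, ha, h⟩
    obtain ⟨c, hcE, hcu⟩ := hc
    have hcC : c ∈ C₁ ∪ C₂ := by
      have : c ∈ C₁ ∪ C₂ ∪ U := hpart ▸ Set.mem_univ c
      rcases this with h | h
      · exact h
      · exact absurd (by rw [hU] at h; exact h) hcu
    obtain ⟨w, _, hwc, hnadj⟩ := hnouniv c hcC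
    have : c ∈ closedNbhd G w := hsub w hcE
    rcases this with h | h
    · exact hwc h.symm
    · exact hnadj (G.adj_symm h)
  exact le_antisymm (Nat.sInf_le h3mem) (le_csInf ⟨3, h3mem⟩ hlb)
end

section
/- For every web graph W_n^m with n ≥ 2m+1, writing μ = gcd(2m+1, n) and l₂ = (2m+1)/μ, the l₂-tuple domination number satisfies γ_{×l₂}(W_n^m) = n/μ. -/
open Set

def webGraph (n m : ℕ) : SimpleGraph (ZMod n) where
  Adj i j := i ≠ j ∧ ∃ l : ℕ, 1 ≤ l ∧ l ≤ m ∧ (j = i + (l : ZMod n) ∨ j = i - (l : ZMod n))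
  symm := ⟨by
    rintro i j ⟨hne, l, h1, h2, h3 | h3⟩
    · exact ⟨hne.symm, l, h1, h2, Or.inr (by rw [h3]; ring)⟩
    · exact ⟨hne.symm, l, h1, h2, Or.inl (by rw [h3]; ring)⟩⟩
  loopless := ⟨fun i h => h.1 rfl⟩

lemma castInj (N : ℕ) (t₁ t₂ : ℤ) (h : (t₁ : ZMod N) = t₂) (hlt : |t₁ - t₂| < N) : t₁ = t₂ := by
  have hd : (N:ℤ) ∣ t₂ - t₁ := ((ZMod.intCast_eq_intCast_iff _ _ _).mp h).dvd
  have := Int.eq_zero_of_abs_lt_dvd hd (by rw [abs_sub_comm]; exact hlt)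
  omega

lemma count_one (μ : ℕ) (hμ : 0 < μ) (a : ℤ) (c : ZMod μ) :
    ((Finset.Ico a (a + μ)).filter (fun t : ℤ => (t : ZMod μ) = c)).card = 1 := by
  haveI : NeZero μ := ⟨hμ.ne'⟩
  rw [Finset.card_eq_one]
  refine ⟨a + (((c.val : ℤ) - a) % (μ:ℤ)), ?_⟩
  ext t
  simp only [Finset.mem_filter, Finset.mem_Ico, Finset.mem_singleton]
  constructor
  · rintro ⟨⟨h1, h2⟩, h3⟩
    have hc : ((a + ((c.val : ℤ) - a) % (μ:ℤ) : ℤ) : ZMod μ) = c := by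
      push_cast [ZMod.intCast_mod]
      simp [ZMod.natCast_val, ZMod.natCast_rightInverse c]
    have := castInj μ t (a + (((c.val : ℤ) - a) % (μ:ℤ))) (by rw [h3, hc])
    have hm1 : 0 ≤ ((c.val : ℤ) - a) % (μ:ℤ) := Int.emod_nonneg _ (by exact_mod_cast hμ.ne')
    have hm2 : ((c.val : ℤ) - a) % (μ:ℤ) < μ := Int.emod_lt_of_pos _ (by exact_mod_cast hμ)
    have := this (by rw [abs_lt]; omega)
    omega
  · rintro rfl
    have hm1 : 0 ≤ ((c.val : ℤ) - a) % (μ:ℤ) := Int.emod_nonneg _ (by exact_mod_cast hμ.ne')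
    have hm2 : ((c.val : ℤ) - a) % (μ:ℤ) < μ := Int.emod_lt_of_pos _ (by exact_mod_cast hμ)
    refine ⟨⟨by omega, by omega⟩, ?_⟩
    push_cast [ZMod.intCast_mod]
    simp [ZMod.natCast_val, ZMod.natCast_rightInverse c]

lemma count_congr (μ k : ℕ) (hμ : 0 < μ) (a : ℤ) (c : ZMod μ) :
    ((Finset.Ico a (a + μ * k)).filter (fun t : ℤ => (t : ZMod μ) = c)).card = k := by
  induction k generalizing a with
  | zero => simp
  | succ k ih =>
    have hsplit : Finset.Ico a (a + μ * (k+1 : ℕ)) =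
        Finset.Ico a (a + μ) ∪ Finset.Ico (a + μ) ((a + μ) + μ * k) := by
      rw [Finset.Ico_union_Ico_eq_Ico (by omega) (by nlinarith)]
      congr 1
      push_cast
      ring
    rw [hsplit, Finset.filter_union]
    rw [Finset.card_union_of_disjoint (Finset.disjoint_filter_filter (Finset.Ico_disjoint_Ico_consecutive _ _ _))]
    rw [count_one μ hμ a c, ih (a + μ)]
    omega

theorem stmt_17 (n m : ℕ) (hm : 0 < m) (hn : 2 * m + 1 ≤ n)
    (μ l₂ : ℕ) (hμ : μ = Nat.gcd (2 * m + 1) n) (hl : l₂ = (2 * m + 1) / μ) :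
    ktupleDomNum (webGraph n m) l₂ = n / μ := by
  haveI : NeZero n := ⟨by omega⟩
  have hμ2 : μ ∣ 2 * m + 1 := hμ ▸ Nat.gcd_dvd_left _ _
  have hμn : μ ∣ n := hμ ▸ Nat.gcd_dvd_right _ _
  have hμpos : 0 < μ := hμ ▸ Nat.gcd_pos_of_pos_left _ (by omega)
  haveI : NeZero μ := ⟨hμpos.ne'⟩
  have hμl : μ * l₂ = 2 * m + 1 := by rw [hl]; exact Nat.mul_div_cancel' hμ2
  have hl2pos : 0 < l₂ := by
    rcases Nat.eq_zero_or_pos l₂ with h | h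
    · simp [h] at hμl
    · exact h
  set I : Finset ℤ := Finset.Icc (-(m:ℤ)) (m:ℤ) with hI
  -- injectivity of the window parametrization
  have hinj : ∀ v : ZMod n, Set.InjOn (fun t : ℤ => v + (t : ZMod n)) ↑I := by
    intro v t₁ ht₁ t₂ ht₂ h
    simp only [hI, Finset.coe_Icc, Set.mem_Icc] at ht₁ ht₂
    have h' : (t₁ : ZMod n) = (t₂ : ZMod n) := by
      have := add_left_cancel h
      exact this
    refine castInj n t₁ t₂ h' ?_
    have : (2*m+1 : ℤ) ≤ n := by exact_mod_cast hn
    rw [abs_lt]; omega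
  set N : ZMod n → Finset (ZMod n) := fun v => I.image (fun t : ℤ => v + (t : ZMod n)) with hN
  have hNcard : ∀ v, (N v).card = 2 * m + 1 := by
    intro v
    rw [hN, Finset.card_image_of_injOn (hinj v), hI, Int.card_Icc]
    omega
  -- membership characterization
  have hNmem : ∀ v x : ZMod n, x ∈ N v ↔ x ∈ closedNbhd (webGraph n m) v := by
    intro v x
    constructor
    · intro hx
      rw [hN] at hx
      simp only [Finset.mem_image, hI, Finset.mem_Icc] at hx
      obtain ⟨t, ⟨ht1, ht2⟩, rfl⟩ := hx
      by_cases ht0 : t = 0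
      · subst ht0; simp [closedNbhd]
      · right
        have hvne : v ≠ v + (t : ZMod n) := by
          intro hcontra
          have : (t : ZMod n) = ((0:ℤ) : ZMod n) := by
            push_cast
            have := hcontra.symm
            nth_rewrite 2 [← add_zero v] at this
            exact add_left_cancel this
          have : (2*m+1 : ℤ) ≤ n := by exact_mod_cast hn
          exact ht0 (castInj n t 0 ‹(t : ZMod n) = ((0:ℤ) : ZMod n)› (by rw [abs_lt]; omega))
        refine ⟨hvne, t.natAbs, ?_, ?_, ?_⟩
        · omega
        · omega
        · rcases le_or_gt 0 t with h | h
          · left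
            congr 1
            rw [show ((t.natAbs : ℕ) : ZMod n) = ((t.natAbs : ℤ) : ZMod n) from (Int.cast_natCast _).symm]
            rw [Int.natAbs_of_nonneg h]
          · right
            rw [show ((t.natAbs : ℕ) : ZMod n) = ((t.natAbs : ℤ) : ZMod n) from (Int.cast_natCast _).symm]
            rw [Int.ofNat_natAbs_of_nonpos h.le]
            push_cast
            ring
    · intro hx
      rw [hN]
      simp only [Finset.mem_image, hI, Finset.mem_Icc]
      rcases hx with rfl | hadj
      · exact ⟨(0:ℤ), by constructor <;> omega, by simp⟩
      · obtain ⟨-, l, h1, h2, h3 | h3⟩ := hadj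
        · exact ⟨(l:ℤ), by constructor <;> omega, by rw [h3]; push_cast; ring⟩
        · exact ⟨-(l:ℤ), by constructor <;> omega, by rw [h3]; push_cast; ring⟩
  have hclosed : ∀ v, closedNbhd (webGraph n m) v = ↑(N v) := by
    intro v
    ext x
    rw [Finset.mem_coe]
    exact (hNmem v x).symm
  -- symmetry
  have hsym : ∀ v x : ZMod n, x ∈ N v ↔ v ∈ N x := by
    have key : ∀ v x : ZMod n, x ∈ N v → v ∈ N x := by
      intro v x hx
      rw [hN] at hx ⊢
      simp only [Finset.mem_image, hI, Finset.mem_Icc] at hx ⊢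
      obtain ⟨t, ⟨ht1, ht2⟩, rfl⟩ := hx
      exact ⟨-t, ⟨by omega, by omega⟩, by push_cast; ring⟩
    exact fun v x => ⟨key v x, key x v⟩
  -- counting formula
  have hcount : ∀ (v : ZMod n) (Df : Finset (ZMod n)),
      (closedNbhd (webGraph n m) v ∩ ↑Df).ncard
        = (I.filter (fun t : ℤ => v + (t : ZMod n) ∈ Df)).card := by
    intro v Df
    rw [hclosed v, ← Finset.coe_inter, Set.ncard_coe_finset]
    rw [← Finset.filter_mem_eq_inter, hN]
    rw [Finset.filter_image]
    exact Finset.card_image_of_injOn ((hinj v).mono (Finset.filter_subset _ _))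
  -- the dominating set
  set π : ZMod n →+* ZMod μ := ZMod.castHom hμn (ZMod μ) with hπ
  set Df : Finset (ZMod n) := Finset.univ.filter (fun x => π x = 0) with hDf
  have hDfmem : ∀ x : ZMod n, x ∈ Df ↔ μ ∣ x.val := by
    intro x
    rw [hDf]
    simp only [Finset.mem_filter, Finset.mem_univ, true_and]
    conv_lhs => rw [show x = ((x.val : ℕ) : ZMod n) from (ZMod.natCast_rightInverse x).symm]
    rw [map_natCast]
    exact ZMod.natCast_eq_zero_iff _ _
  have hDfcard : Df.card = n / μ := by
    rw [show n / μ = (Finset.range (n / μ)).card from (Finset.card_range _).symm]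
    apply Finset.card_bij' (fun x _ => x.val / μ) (fun i _ => ((μ * i : ℕ) : ZMod n))
    · intro x hx
      rw [hDfmem] at hx
      obtain ⟨q, hq⟩ := hx
      obtain ⟨Q, hQ⟩ := hμn
      have hxlt := ZMod.val_lt x
      simp only [Finset.mem_range]
      rw [hq, Nat.mul_div_cancel_left _ hμpos, hQ, Nat.mul_div_cancel_left _ hμpos]
      by_contra hcon
      push_neg at hcon
      nlinarith [hq ▸ hxlt]
    · intro i hi
      simp only [Finset.mem_range] at hi
      rw [hDfmem]
      obtain ⟨Q, hQ⟩ := hμn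
      have hnQ : n / μ = Q := by rw [hQ]; exact Nat.mul_div_cancel_left _ hμpos
      have hlt : μ * i < n := by rw [hQ]; exact (mul_lt_mul_iff_right₀ hμpos).mpr (by omega)
      rw [ZMod.val_cast_of_lt hlt]
      exact ⟨i, rfl⟩
    · intro x hx
      rw [hDfmem] at hx
      obtain ⟨q, hq⟩ := hx
      rw [hq, Nat.mul_div_cancel_left _ hμpos, ← hq]
      exact ZMod.natCast_rightInverse x
    · intro i hi
      simp only [Finset.mem_range] at hi
      obtain ⟨Q, hQ⟩ := hμn
      have hnQ : n / μ = Q := by rw [hQ]; exact Nat.mul_div_cancel_left _ hμpos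
      have hlt : μ * i < n := by rw [hQ]; exact (mul_lt_mul_iff_right₀ hμpos).mpr (by omega)
      rw [ZMod.val_cast_of_lt hlt, Nat.mul_div_cancel_left _ hμpos]
  -- exact count inside the window for each v
  have hwindow : ∀ v : ZMod n,
      (I.filter (fun t : ℤ => v + (t : ZMod n) ∈ Df)).card = l₂ := by
    intro v
    have hcond : ∀ t : ℤ, (v + (t : ZMod n) ∈ Df) ↔ ((t : ZMod μ) = -(π v)) := by
      intro t
      rw [hDf]
      simp only [Finset.mem_filter, Finset.mem_univ, true_and]
      rw [map_add, map_intCast]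
      constructor
      · intro h; linear_combination h
      · intro h; linear_combination h
    have : I.filter (fun t : ℤ => v + (t : ZMod n) ∈ Df)
        = I.filter (fun t : ℤ => (t : ZMod μ) = -(π v)) := by
      apply Finset.filter_congr
      intro t _
      exact (by simpa using hcond t)
    rw [this]
    have hIeq : I = Finset.Ico (-(m:ℤ)) ((-(m:ℤ)) + μ * l₂) := by
      rw [hI]
      ext t
      simp only [Finset.mem_Icc, Finset.mem_Ico]
      have : (μ : ℤ) * l₂ = 2*m+1 := by exact_mod_cast congrArg (Nat.cast : ℕ → ℤ) hμl
      omega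
    rw [hIeq]
    exact count_congr μ l₂ hμpos _ _
  have hDom : IsKTupleDomSet (webGraph n m) l₂ ↑Df := by
    intro v
    rw [hcount v Df, hwindow v]
  have hmem : (n / μ) ∈ {d | ∃ D : Set (ZMod n), IsKTupleDomSet (webGraph n m) l₂ D ∧ D.ncard = d} :=
    ⟨↑Df, hDom, by rw [Set.ncard_coe_finset, hDfcard]⟩
  -- lower bound
  have hlower : ∀ d ∈ {d | ∃ D : Set (ZMod n), IsKTupleDomSet (webGraph n m) l₂ D ∧ D.ncard = d},
      n / μ ≤ d := by
    rintro d ⟨D, hD, rfl⟩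
    have hfin : D.Finite := Set.toFinite D
    have hDeq : D = ↑hfin.toFinset := (Set.Finite.coe_toFinset hfin).symm
    set Dfin := hfin.toFinset with hDfin
    have hkey : ∀ v : ZMod n, l₂ ≤ (N v ∩ Dfin).card := by
      intro v
      have := hD v
      rw [hDeq, hclosed v, ← Finset.coe_inter, Set.ncard_coe_finset] at this
      exact this
    have hsum : (Fintype.card (ZMod n)) * l₂ ≤ ∑ v : ZMod n, (N v ∩ Dfin).card := by
      calc (Fintype.card (ZMod n)) * l₂ = ∑ _v : ZMod n, l₂ := by
            rw [Finset.sum_const, smul_eq_mul]; rfl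
        _ ≤ ∑ v : ZMod n, (N v ∩ Dfin).card := Finset.sum_le_sum fun v _ => hkey v
    have hswap : ∑ v : ZMod n, (N v ∩ Dfin).card = Dfin.card * (2 * m + 1) := by
      have h1 : ∀ v, (N v ∩ Dfin).card = ∑ x ∈ Dfin, if x ∈ N v then 1 else 0 := by
        intro v
        rw [Finset.inter_comm, ← Finset.filter_mem_eq_inter, Finset.card_filter]
      calc ∑ v : ZMod n, (N v ∩ Dfin).card
          = ∑ v : ZMod n, ∑ x ∈ Dfin, if x ∈ N v then 1 else 0 := by
            exact Finset.sum_congr rfl fun v _ => h1 v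
        _ = ∑ x ∈ Dfin, ∑ v : ZMod n, if x ∈ N v then 1 else 0 := Finset.sum_comm
        _ = ∑ x ∈ Dfin, (N x).card := by
            refine Finset.sum_congr rfl fun x _ => ?_
            rw [← Finset.card_filter]
            congr 1
            ext v
            simp only [Finset.mem_filter, Finset.mem_univ, true_and]
            exact hsym v x
        _ = ∑ _x ∈ Dfin, (2 * m + 1) := Finset.sum_congr rfl fun x _ => hNcard x
        _ = Dfin.card * (2 * m + 1) := by rw [Finset.sum_const, smul_eq_mul]
    rw [hswap, ZMod.card] at hsum
    -- n * l₂ ≤ Dfin.card * (2m+1) ⟹ n/μ ≤ Dfin.card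
    have h2 : (n / μ) * (μ * l₂) ≤ Dfin.card * (μ * l₂) := by
      rw [hμl]
      calc (n / μ) * (2 * m + 1) ≤ n * l₂ := by
            rw [← hμl]
            obtain ⟨Q, hQ⟩ := hμn
            rw [hQ, Nat.mul_div_cancel_left _ hμpos]
            ring_nf
            omega
        _ ≤ Dfin.card * (2 * m + 1) := hsum
    have h3 : n / μ ≤ Dfin.card :=
      Nat.le_of_mul_le_mul_right h2 (Nat.mul_pos hμpos hl2pos)
    rwa [Set.ncard_eq_toFinset_card D hfin]
  rw [ktupleDomNum]
  exact le_antisymm (Nat.sInf_le hmem) (le_csInf ⟨_, hmem⟩ hlower)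
end

section
/- For every web graph W_n^m with n ≥ 2m+1 and every positive integer k with k ≤ 2m+1, the k-tuple domination number is γ_{×k}(W_n^m) = ⌈kn/(2m+1)⌉. -/
open Set

set_option maxHeartbeats 1000000

lemma mem_cn {n m : ℕ} {v w : ZMod n} :
    w ∈ closedNbhd (webGraph n m) v ↔ ∃ l : ℤ, |l| ≤ (m : ℤ) ∧ w = v + (l : ZMod n) := by
  simp only [closedNbhd, Set.mem_insert_iff, SimpleGraph.mem_neighborSet, webGraph]
  constructor
  · rintro (rfl | ⟨hne, l, h1, h2, h3 | h3⟩)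
    · exact ⟨0, by simp⟩
    · exact ⟨(l : ℤ), by simpa using h2, by rw [h3]; push_cast; ring⟩
    · exact ⟨-(l : ℤ), by simpa using h2, by rw [h3]; push_cast; ring⟩
  · rintro ⟨l, hl, rfl⟩
    by_cases h0 : v + (l : ZMod n) = v
    · exact Or.inl h0
    right
    have hlne : l ≠ 0 := by rintro rfl; simp at h0
    have hla : 1 ≤ l.natAbs := by omega
    have hlm : l.natAbs ≤ m := by
      have := Int.abs_eq_natAbs l
      omega
    refine ⟨fun h => h0 h.symm, l.natAbs, hla, hlm, ?_⟩
    rcases le_or_gt 0 l with h | h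
    · left
      have : ((l.natAbs : ℕ) : ℤ) = l := Int.natAbs_of_nonneg h
      rw [← Int.cast_natCast (R := ZMod n), this]
    · right
      have : ((l.natAbs : ℕ) : ℤ) = -l := by
        rw [Int.ofNat_natAbs_of_nonpos h.le]
      rw [← Int.cast_natCast (R := ZMod n), this]
      push_cast
      ring

lemma cast_inj_of_lt {n : ℕ} {x y : ℤ} (h : (x : ZMod n) = y) (hxy : |x - y| < n) : x = y := by
  have hd : (n : ℤ) ∣ x - y := by
    have : ((x - y : ℤ) : ZMod n) = 0 := by push_cast [h]; ring
    exact (ZMod.intCast_zmod_eq_zero_iff_dvd _ _).mp this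
  have := Int.eq_zero_of_abs_lt_dvd hd hxy
  omega

lemma cn_eq {n m : ℕ} (v : ZMod n) :
    closedNbhd (webGraph n m) v = (fun l : ℤ => v + (l : ZMod n)) '' Set.Icc (-(m:ℤ)) m := by
  ext w
  rw [mem_cn]
  simp only [Set.mem_image, Set.mem_Icc]
  constructor
  · rintro ⟨l, hl, rfl⟩; exact ⟨l, by rw [abs_le] at hl; exact hl, rfl⟩
  · rintro ⟨l, hl, rfl⟩; exact ⟨l, abs_le.mpr hl, rfl⟩

lemma ncard_cn {n m : ℕ} (hn : 2 * m + 1 ≤ n) (v : ZMod n) :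
    (closedNbhd (webGraph n m) v).ncard = 2 * m + 1 := by
  rw [cn_eq, Set.ncard_image_of_injOn, ← Finset.coe_Icc, Set.ncard_coe_finset, Int.card_Icc]
  · omega
  · rintro x hx y hy hxy
    simp only [Set.mem_Icc] at hx hy
    have h : (x : ZMod n) = y := by
      have := add_left_cancel hxy
      exact_mod_cast this
    exact cast_inj_of_lt h (by rw [abs_lt]; omega)

lemma cn_symm {n m : ℕ} {v w : ZMod n} :
    w ∈ closedNbhd (webGraph n m) v ↔ v ∈ closedNbhd (webGraph n m) w := by
  rw [mem_cn, mem_cn]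
  constructor <;> rintro ⟨l, hl, h⟩ <;> exact ⟨-l, by simpa using hl, by rw [h]; push_cast; ring⟩

lemma lower_bd {n m k : ℕ} (hn : 2 * m + 1 ≤ n) (D : Set (ZMod n))
    (hD : ∀ v : ZMod n, k ≤ (closedNbhd (webGraph n m) v ∩ D).ncard) :
    k * n ≤ (2 * m + 1) * D.ncard := by
  classical
  haveI : NeZero n := ⟨by omega⟩
  have hfin : D.Finite := Set.toFinite D
  set Df : Finset (ZMod n) := hfin.toFinset with hDf
  have hcard : D.ncard = Df.card := Set.ncard_eq_toFinset_card D hfin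
  have h1 : ∀ v : ZMod n, (closedNbhd (webGraph n m) v ∩ D).ncard
      = (Df.filter (fun d => d ∈ closedNbhd (webGraph n m) v)).card := by
    intro v
    have : closedNbhd (webGraph n m) v ∩ D
        = ↑(Df.filter (fun d => d ∈ closedNbhd (webGraph n m) v)) := by
      ext x
      simp only [Set.mem_inter_iff, Finset.coe_filter, Set.mem_setOf_eq, hDf, Set.Finite.mem_toFinset, and_comm]
    rw [this, Set.ncard_coe_finset]
  have h2 : ∀ d : ZMod n, (Finset.univ.filter (fun v => d ∈ closedNbhd (webGraph n m) v)).card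
      = 2 * m + 1 := by
    intro d
    have : closedNbhd (webGraph n m) d
        = ↑(Finset.univ.filter (fun v => d ∈ closedNbhd (webGraph n m) v)) := by
      ext x
      simp [cn_symm]
    have h3 := ncard_cn hn d
    rw [this, Set.ncard_coe_finset] at h3
    exact h3
  have key : ∑ v : ZMod n, (Df.filter (fun d => d ∈ closedNbhd (webGraph n m) v)).card
      = Df.card * (2 * m + 1) := by
    simp_rw [Finset.card_filter]
    rw [Finset.sum_comm]
    simp_rw [← Finset.card_filter, h2]
    rw [Finset.sum_const, smul_eq_mul]
  have hsum : k * n ≤ ∑ v : ZMod n, (Df.filter (fun d => d ∈ closedNbhd (webGraph n m) v)).card := by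
    calc k * n = ∑ _v : ZMod n, k := by
          rw [Finset.sum_const, smul_eq_mul, Finset.card_univ, ZMod.card, mul_comm]
      _ ≤ _ := Finset.sum_le_sum (fun v _ => by rw [← h1]; exact hD v)
  rw [key] at hsum
  calc k * n ≤ Df.card * (2 * m + 1) := hsum
    _ = (2 * m + 1) * D.ncard := by rw [hcard, mul_comm]

lemma upper_bd {n m k : ℕ} (hm : 0 < m) (hn : 2 * m + 1 ≤ n) (hk : 0 < k) (hk2 : k ≤ 2 * m + 1) :
    ∃ D : Set (ZMod n), (∀ v : ZMod n, k ≤ (closedNbhd (webGraph n m) v ∩ D).ncard) ∧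
      D.ncard = (k * n + 2 * m) / (2 * m + 1) := by
  classical
  haveI : NeZero n := ⟨by omega⟩
  set r : ℕ := (k * n + 2 * m) / (2 * m + 1) with hrdef
  have hs : 0 < 2 * m + 1 := by omega
  have hnk : n ≤ k * n := Nat.le_mul_of_pos_left n hk
  -- r ≥ 1
  have hr1 : 1 ≤ r := by
    rw [hrdef, Nat.one_le_div_iff hs]; omega
  -- r ≤ n
  have hrn : r ≤ n := by
    rw [hrdef, Nat.div_le_iff_le_mul_add_pred hs]
    have h1 : k * n ≤ (2 * m + 1) * n := by
      have := Nat.mul_le_mul_right n hk2; linarith [this]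
    have h2 : 2 * m + 1 - 1 = 2 * m := rfl
    rw [h2]; linarith
  -- k * n ≤ (2m+1) * r
  have hkr : k * n ≤ (2 * m + 1) * r := by
    have h1 := Nat.div_add_mod (k * n + 2 * m) (2 * m + 1)
    have h2 : (k * n + 2 * m) % (2 * m + 1) < 2 * m + 1 := Nat.mod_lt _ hs
    rw [← hrdef] at h1
    linarith
  have hr0 : 0 < r := hr1
  clear_value r
  -- the nat construction function
  set g : ℕ → ℕ := fun j => j * n / r with hgdef
  have hglt : ∀ j, j < r → g j < n := by
    intro j hj
    rw [hgdef, Nat.div_lt_iff_lt_mul hr0]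
    calc j * n < r * n := Nat.mul_lt_mul_of_pos_right hj (by omega)
      _ = n * r := mul_comm r n
  have hgmono : StrictMono g := by
    apply strictMono_nat_of_lt_succ
    intro j
    show j * n / r < (j + 1) * n / r
    have h1 : j * n / r + 1 = (j * n + r) / r := (Nat.add_div_right _ hr0).symm
    have h2 : (j * n + r) / r ≤ ((j + 1) * n) / r :=
      Nat.div_le_div_right (by rw [add_mul, one_mul]; omega)
    omega
  set D : Set (ZMod n) := (fun j : ℕ => ((g j : ℕ) : ZMod n)) '' Set.Iio r with hDdef
  have hinjD : Set.InjOn (fun j : ℕ => ((g j : ℕ) : ZMod n)) (Set.Iio r) := by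
    intro x hx y hy hxy
    simp only [Set.mem_Iio] at hx hy
    have hx' : (↑(g x) : ZMod n).val = g x := ZMod.val_cast_of_lt (hglt x hx)
    have hy' : (↑(g y) : ZMod n).val = g y := ZMod.val_cast_of_lt (hglt y hy)
    have : g x = g y := by
      rw [← hx', ← hy']; simp only at hxy; rw [hxy]
    exact hgmono.injective this
  have hcardD : D.ncard = r := by
    rw [hDdef, Set.ncard_image_of_injOn hinjD, ← Finset.coe_range,
      Set.ncard_coe_finset, Finset.card_range]
  clear_value g
  -- the integer version of g
  set f : ℤ → ℤ := fun j => j * n / r with hfdef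
  have hRpos : (0 : ℤ) < (r : ℤ) := by exact_mod_cast hr0
  have hNpos : (0 : ℤ) < (n : ℤ) := by exact_mod_cast (show 0 < n by omega)
  have hRne : (r : ℤ) ≠ 0 := ne_of_gt hRpos
  have hfg : ∀ j : ℕ, f (j : ℤ) = (g j : ℤ) := by
    intro j
    rw [hfdef, hgdef]
    simp only
    push_cast [Int.natCast_ediv]
    ring_nf
  have hfmono : StrictMono f := by
    apply strictMono_int_of_lt_succ
    intro j
    have h1 : (j * (n:ℤ) + r) / r = j * (n:ℤ) / r + 1 := by
      simpa using Int.add_mul_ediv_right (j * (n:ℤ)) 1 hRne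
    have h2 : (j * (n:ℤ) + r) / r ≤ ((j + 1) * n) / r := by
      apply Int.ediv_le_ediv hRpos
      have h3 : (r : ℤ) ≤ n := by exact_mod_cast hrn
      nlinarith
    show j * (n:ℤ) / r < (j + 1) * n / r
    omega
  clear_value D
  have hmemD : ∀ j : ℤ, ((f j : ℤ) : ZMod n) ∈ D := by
    intro j
    have hj0 : 0 ≤ j % r := Int.emod_nonneg j hRne
    have hjr : j % r < r := Int.emod_lt_of_pos j hRpos
    have hsplit : (r : ℤ) * (j / r) + j % r = j := Int.mul_ediv_add_emod j r
    have hfeq : f j = f (j % r) + (j / r) * n := by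
      rw [hfdef]
      simp only
      have : j * n = (j % r) * n + ((j / r) * n) * r := by nlinarith [hsplit]
      rw [this, Int.add_mul_ediv_right _ _ hRne]
    have hcast : ((f j : ℤ) : ZMod n) = ((f (j % r) : ℤ) : ZMod n) := by
      rw [hfeq]
      push_cast
      rw [ZMod.natCast_self]
      ring
    rw [hcast]
    have htn : ((j % r).toNat : ℤ) = j % r := Int.toNat_of_nonneg hj0
    have hfg2 := hfg (j % r).toNat
    rw [htn] at hfg2
    rw [hfg2, hDdef]
    exact ⟨(j % r).toNat, by simp only [Set.mem_Iio]; omega, by simp⟩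
  clear_value f
  refine ⟨D, ?_, hcardD⟩
  intro v
  set a : ℤ := (v.val : ℤ) - m with hadef
  set s : ℤ := 2 * m + 1 with hsdef
  have hns : s ≤ (n:ℤ) := by rw [hsdef]; exact_mod_cast hn
  set jlo : ℤ := (a * r + (n - 1)) / n with hjlodef
  set C : ℤ := ((a + s) * r + (n - 1)) / n with hCdef
  have hNne : (n : ℤ) ≠ 0 := ne_of_gt hNpos
  clear_value a s jlo C
  have hjlo_mul : a * r ≤ jlo * n := by
    rw [hjlodef]
    have h1 := Int.mul_ediv_add_emod (a * r + ((n:ℤ) - 1)) n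
    have h2 : 0 ≤ (a * r + ((n:ℤ) - 1)) % n := Int.emod_nonneg _ hNne
    have h3 : (a * r + ((n:ℤ) - 1)) % n < n := Int.emod_lt_of_pos _ hNpos
    nlinarith
  have hC_mul : C * n ≤ (a + s) * r + (n - 1) := by
    rw [hCdef]
    have h1 := Int.mul_ediv_add_emod ((a + s) * r + ((n:ℤ) - 1)) n
    have h2 : 0 ≤ ((a + s) * r + ((n:ℤ) - 1)) % n := Int.emod_nonneg _ hNne
    nlinarith
  have hcount : jlo + k ≤ C := by
    have h1 : (a * r + ((n:ℤ) - 1) + k * n) / n = jlo + k := by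
      rw [Int.add_mul_ediv_right _ _ hNne, ← hjlodef]
    have h2 : a * r + ((n:ℤ) - 1) + k * n ≤ (a + s) * r + ((n:ℤ) - 1) := by
      have h3 : (k:ℤ) * n ≤ s * r := by
        rw [hsdef]
        exact_mod_cast hkr
      linarith [h3, (show (a + s) * (r:ℤ) = a * r + s * r by ring)]
    calc jlo + k = (a * r + ((n:ℤ) - 1) + k * n) / n := h1.symm
      _ ≤ C := by rw [hCdef]; exact Int.ediv_le_ediv hNpos h2
  have hwin : ∀ j : ℤ, jlo ≤ j → j ≤ C - 1 → a ≤ f j ∧ f j ≤ a + s - 1 := by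
    intro j hj1 hj2
    constructor
    · rw [hfdef]
      simp only
      rw [Int.le_ediv_iff_mul_le hRpos]
      calc a * r ≤ jlo * n := hjlo_mul
        _ ≤ j * n := mul_le_mul_of_nonneg_right hj1 hNpos.le
    · have hjn : j * n ≤ (a + s) * r - 1 := by
        have h7 := mul_le_mul_of_nonneg_right hj2 hNpos.le
        have h8 : (C - 1) * (n:ℤ) = C * n - n := by ring
        linarith [hC_mul]
      have h5 : f j ≤ ((a + s) * r - 1) / r := by
        rw [hfdef]; exact Int.ediv_le_ediv hRpos hjn
      have heq : ((a + s) * (r:ℤ) - 1) / r = a + s - 1 := by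
        have h4 : (a + s) * (r:ℤ) - 1 = (r - 1) + (a + s - 1) * r := by ring
        rw [h4, Int.add_mul_ediv_right _ _ hRne, Int.ediv_eq_zero_of_lt (by omega) (by omega)]
        ring
      omega
  have hsub : (fun j : ℤ => ((f j : ℤ) : ZMod n)) '' Set.Icc jlo (C - 1)
      ⊆ closedNbhd (webGraph n m) v ∩ D := by
    rintro x ⟨j, hj, rfl⟩
    rw [Set.mem_Icc] at hj
    obtain ⟨hw1, hw2⟩ := hwin j hj.1 hj.2
    refine ⟨?_, hmemD j⟩
    rw [mem_cn]
    refine ⟨f j - v.val, by rw [abs_le]; omega, ?_⟩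
    have hvv : ((v.val : ℕ) : ZMod n) = v := by rw [ZMod.natCast_val, ZMod.cast_id]
    push_cast
    rw [hvv]
    ring
  have hinjw : Set.InjOn (fun j : ℤ => ((f j : ℤ) : ZMod n)) (Set.Icc jlo (C - 1)) := by
    intro x hx y hy hxy
    rw [Set.mem_Icc] at hx hy
    obtain ⟨hx1, hx2⟩ := hwin x hx.1 hx.2
    obtain ⟨hy1, hy2⟩ := hwin y hy.1 hy.2
    simp only at hxy
    have h6 : f x = f y := cast_inj_of_lt hxy (by rw [abs_lt]; omega)
    exact hfmono.injective h6
  calc (k:ℕ) ≤ (Set.Icc jlo (C - 1)).ncard := by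
        rw [← Finset.coe_Icc, Set.ncard_coe_finset, Int.card_Icc]
        omega
    _ = ((fun j : ℤ => ((f j : ℤ) : ZMod n)) '' Set.Icc jlo (C - 1)).ncard :=
        (Set.ncard_image_of_injOn hinjw).symm
    _ ≤ (closedNbhd (webGraph n m) v ∩ D).ncard := Set.ncard_le_ncard hsub (Set.toFinite _)

theorem stmt_18 (n m k : ℕ) (hm : 0 < m) (hn : 2 * m + 1 ≤ n)
    (hk : 0 < k) (hk2 : k ≤ 2 * m + 1) :
    ktupleDomNum (webGraph n m) k = (k * n + 2 * m) / (2 * m + 1) := by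
  obtain ⟨D, hDdom, hDcard⟩ := upper_bd hm hn hk hk2
  have hmem : (k * n + 2 * m) / (2 * m + 1) ∈
      {d | ∃ D : Set (ZMod n), IsKTupleDomSet (webGraph n m) k D ∧ D.ncard = d} :=
    ⟨D, hDdom, hDcard⟩
  refine le_antisymm (Nat.sInf_le hmem) (le_csInf ⟨_, hmem⟩ ?_)
  rintro d ⟨D', hD', rfl⟩
  have hlb := lower_bd hn D' hD'
  rw [Nat.div_le_iff_le_mul_add_pred (by omega)]
  have h2 : 2 * m + 1 - 1 = 2 * m := rfl
  rw [h2]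
  linarith
end
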